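/- Let Σ be a polynomial control system on ℝ^n and let 1 ≤ l ≤ n. Then the set S_∞^{<l} is an algebraic set; more precisely, for any k with C^{#k} = C^{#k+1}, one has S_∞^{<l} = S_k^{<l}, and S_∞^{<l} = 𝕍(J) where J is the ideal of ℝ[x] generated by the determinants of all l×l submatrices of the matrix whose columns are the elements of 𝒞^k. -/

import Mathlib

open MvPolynomial

/-- Evaluation of a polynomial vector field at a point of `ℝ^n`. -/
noncomputable def pvfEval {n : ℕ} (X : Fin n → MvPolynomial (Fin n) ℝ) (a : Fin n → ℝ) :
    Fin n → ℝ := fun i => eval a (X i)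

/-- Lie bracket of polynomial vector fields:
`[X,Y]_j = ∑ i, (X i * ∂Y_j/∂x_i − Y i * ∂X_j/∂x_i)`. -/
noncomputable def pBracket {n : ℕ} (X Y : Fin n → MvPolynomial (Fin n) ℝ) :
    Fin n → MvPolynomial (Fin n) ℝ :=
  fun j => ∑ i, (X i * pderiv i (Y j) - Y i * pderiv i (X j))

/-- Lie derivative of a polynomial along a polynomial vector field:
`L_X p = ∑ i, X i * ∂p/∂x_i`. -/
noncomputable def pLieDeriv {n : ℕ} (X : Fin n → MvPolynomial (Fin n) ℝ)
    (p : MvPolynomial (Fin n) ℝ) : MvPolynomial (Fin n) ℝ :=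
  ∑ i, X i * pderiv i p

/-- An ideal `I` is invariant under `L_X` if `L_X p ∈ I` for every `p ∈ I`. -/
def IdealInvariant {n : ℕ} (X : Fin n → MvPolynomial (Fin n) ℝ)
    (I : Ideal (MvPolynomial (Fin n) ℝ)) : Prop :=
  ∀ p ∈ I, pLieDeriv X p ∈ I

/-- The algebraic set `𝕍(J)` of an ideal `J`. -/
def zeroSet {n : ℕ} (J : Ideal (MvPolynomial (Fin n) ℝ)) : Set (Fin n → ℝ) :=
  {a | ∀ p ∈ J, eval a p = 0}

/-- The vanishing ideal `𝕀(A)` of a set `A ⊆ ℝ^n`. -/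
noncomputable def zeroIdeal {n : ℕ} (A : Set (Fin n → ℝ)) :
    Ideal (MvPolynomial (Fin n) ℝ) where
  carrier := {p | ∀ a ∈ A, eval a p = 0}
  add_mem' := fun hp hq a ha => by simp [hp a ha, hq a ha]
  zero_mem' := fun a ha => by simp
  smul_mem' := fun c p hp a ha => by simp [smul_eq_mul, hp a ha]

/-- The family `𝒞^k` of Lie brackets of depth at most `k` of the system vector fields
`f, g_1, …, g_m`: `𝒞^0 = {f, g_1, …, g_m}` and
`𝒞^{k+1} = 𝒞^k ∪ {[X,h] : X ∈ {f, g_1, …, g_m}, h ∈ 𝒞^k}`. -/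
def accFam {n m : ℕ} (f : Fin n → MvPolynomial (Fin n) ℝ)
    (g : Fin m → Fin n → MvPolynomial (Fin n) ℝ) :
    ℕ → Set (Fin n → MvPolynomial (Fin n) ℝ)
  | 0 => insert f (Set.range g)
  | k + 1 => accFam f g k ∪
      {h | ∃ X ∈ insert f (Set.range g), ∃ h' ∈ accFam f g k, h = pBracket X h'}

/-- `C^k(a) = span_ℝ {h(a) : h ∈ 𝒞^k}`. -/
noncomputable def accSpan {n m : ℕ} (f : Fin n → MvPolynomial (Fin n) ℝ)
    (g : Fin m → Fin n → MvPolynomial (Fin n) ℝ) (k : ℕ) (a : Fin n → ℝ) :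
    Submodule ℝ (Fin n → ℝ) :=
  Submodule.span ℝ ((fun h => pvfEval h a) '' accFam f g k)

/-- `C(a) = span_ℝ {h(a) : h ∈ 𝒞}`, where `𝒞 = ⋃ k, 𝒞^k`. -/
noncomputable def accSpanInf {n m : ℕ} (f : Fin n → MvPolynomial (Fin n) ℝ)
    (g : Fin m → Fin n → MvPolynomial (Fin n) ℝ) (a : Fin n → ℝ) :
    Submodule ℝ (Fin n → ℝ) :=
  Submodule.span ℝ ((fun h => pvfEval h a) '' ⋃ k, accFam f g k)

/-- `S_k^{<l} = {a : dim C^k(a) < l}`. -/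
def singularSetLt {n m : ℕ} (f : Fin n → MvPolynomial (Fin n) ℝ)
    (g : Fin m → Fin n → MvPolynomial (Fin n) ℝ) (k l : ℕ) : Set (Fin n → ℝ) :=
  {a | Module.finrank ℝ (accSpan f g k a) < l}

/-- `S_∞^{<l} = {a : dim C(a) < l}`;  `S_∞ = S_∞^{<n}`. -/
def singularSetInfLt {n m : ℕ} (f : Fin n → MvPolynomial (Fin n) ℝ)
    (g : Fin m → Fin n → MvPolynomial (Fin n) ℝ) (l : ℕ) : Set (Fin n → ℝ) :=
  {a | Module.finrank ℝ (accSpanInf f g a) < l}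

/-- The ideal `I_{M_k}^{<l}` generated by the determinants of all `l×l` submatrices of the
matrix whose columns are the elements of `𝒞^k` (choices of `l` columns from `𝒞^k` and
`l` rows). -/
noncomputable def minorIdeal {n m : ℕ} (f : Fin n → MvPolynomial (Fin n) ℝ)
    (g : Fin m → Fin n → MvPolynomial (Fin n) ℝ) (k l : ℕ) :
    Ideal (MvPolynomial (Fin n) ℝ) :=
  Ideal.span {p | ∃ (rows : Fin l → Fin n) (cols : Fin l → (Fin n → MvPolynomial (Fin n) ℝ)),
    (∀ j, cols j ∈ accFam f g k) ∧ p = (Matrix.of fun i j => cols j (rows i)).det}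

/-- The submodule `C^{#k}` of the `ℝ[x]`-module `ℝ[x]^n` generated by `𝒞^k`. -/
noncomputable def accModule {n m : ℕ} (f : Fin n → MvPolynomial (Fin n) ℝ)
    (g : Fin m → Fin n → MvPolynomial (Fin n) ℝ) (k : ℕ) :
    Submodule (MvPolynomial (Fin n) ℝ) (Fin n → MvPolynomial (Fin n) ℝ) :=
  Submodule.span (MvPolynomial (Fin n) ℝ) (accFam f g k)

section Aux

open Matrix in
lemma _transpose_notation_check {a b : ℕ} (M : Matrix (Fin a) (Fin b) ℝ) : Mᵀ = M.transpose := rfl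

open Matrix

variable {n m : ℕ}

/-! ### Basic lemmas on `pvfEval` and `pBracket` -/

lemma pvfEval_zero (a : Fin n → ℝ) : pvfEval (0 : Fin n → MvPolynomial (Fin n) ℝ) a = 0 := by
  funext i; simp [pvfEval]

lemma pvfEval_add (X Y : Fin n → MvPolynomial (Fin n) ℝ) (a : Fin n → ℝ) :
    pvfEval (X + Y) a = pvfEval X a + pvfEval Y a := by
  funext i; simp [pvfEval]

lemma pvfEval_smul (p : MvPolynomial (Fin n) ℝ) (X : Fin n → MvPolynomial (Fin n) ℝ)
    (a : Fin n → ℝ) : pvfEval (p • X) a = eval a p • pvfEval X a := by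
  funext i; simp [pvfEval, smul_eq_mul]

lemma pBracket_zero_right (X : Fin n → MvPolynomial (Fin n) ℝ) :
    pBracket X (0 : Fin n → MvPolynomial (Fin n) ℝ) = 0 := by
  funext j; simp [pBracket]

lemma pBracket_add_right (X Y Z : Fin n → MvPolynomial (Fin n) ℝ) :
    pBracket X (Y + Z) = pBracket X Y + pBracket X Z := by
  funext j
  simp only [pBracket, Pi.add_apply, map_add]
  rw [← Finset.sum_add_distrib]
  exact Finset.sum_congr rfl fun i _ => by ring

lemma pBracket_smul_right (X Y : Fin n → MvPolynomial (Fin n) ℝ)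
    (p : MvPolynomial (Fin n) ℝ) :
    pBracket X (p • Y) = p • pBracket X Y + pLieDeriv X p • Y := by
  funext j
  simp only [pBracket, pLieDeriv, Pi.add_apply, Pi.smul_apply, smul_eq_mul, pderiv_mul,
    Finset.mul_sum, Finset.sum_mul]
  rw [← Finset.sum_add_distrib]
  exact Finset.sum_congr rfl fun i _ => by ring

/-! ### Monotonicity of `accFam` and `accModule` -/

lemma accFam_succ (f : Fin n → MvPolynomial (Fin n) ℝ)
    (g : Fin m → Fin n → MvPolynomial (Fin n) ℝ) (k : ℕ) :
    accFam f g (k + 1) = accFam f g k ∪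
      {h | ∃ X ∈ insert f (Set.range g), ∃ h' ∈ accFam f g k, h = pBracket X h'} := rfl

lemma accFam_mono (f : Fin n → MvPolynomial (Fin n) ℝ)
    (g : Fin m → Fin n → MvPolynomial (Fin n) ℝ) :
    Monotone (accFam f g) :=
  monotone_nat_of_le_succ fun k => by rw [accFam_succ]; exact Set.subset_union_left

lemma accModule_mono (f : Fin n → MvPolynomial (Fin n) ℝ)
    (g : Fin m → Fin n → MvPolynomial (Fin n) ℝ) :
    Monotone (accModule f g) :=
  fun a b hab => Submodule.span_mono (accFam_mono f g hab)

lemma pBracket_mem_accModule_succ (f : Fin n → MvPolynomial (Fin n) ℝ)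
    (g : Fin m → Fin n → MvPolynomial (Fin n) ℝ) (k : ℕ)
    (X : Fin n → MvPolynomial (Fin n) ℝ) (hX : X ∈ insert f (Set.range g))
    {h : Fin n → MvPolynomial (Fin n) ℝ} (hh : h ∈ accModule f g k) :
    pBracket X h ∈ accModule f g (k + 1) := by
  induction hh using Submodule.span_induction with
  | mem y hy =>
      exact Submodule.subset_span (by rw [accFam_succ]; exact Or.inr ⟨X, hX, y, hy, rfl⟩)
  | zero => rw [pBracket_zero_right]; exact zero_mem _
  | add y z hy hz hy' hz' => rw [pBracket_add_right]; exact add_mem hy' hz'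
  | smul p y hy hy' =>
      rw [pBracket_smul_right]
      exact add_mem (Submodule.smul_mem _ _ hy')
        (Submodule.smul_mem _ _ (accModule_mono f g (Nat.le_succ k) hy))

lemma accModule_stab (f : Fin n → MvPolynomial (Fin n) ℝ)
    (g : Fin m → Fin n → MvPolynomial (Fin n) ℝ) (k : ℕ)
    (hk : accModule f g k = accModule f g (k + 1)) :
    ∀ j, accModule f g (k + j) = accModule f g k := by
  intro j
  induction j with
  | zero => rfl
  | succ j ih =>
      refine le_antisymm ?_ (accModule_mono f g (Nat.le_add_right k (j + 1)))
      show accModule f g ((k + j) + 1) ≤ accModule f g k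
      refine Submodule.span_le.mpr ?_
      rw [accFam_succ]
      rintro h (hmem | ⟨X, hX, h', hh', rfl⟩)
      · rw [← ih]; exact Submodule.subset_span hmem
      · have hh'' : h' ∈ accModule f g k := by rw [← ih]; exact Submodule.subset_span hh'
        have := pBracket_mem_accModule_succ f g k X hX hh''
        rwa [← hk] at this

lemma accFam_subset_accModule (f : Fin n → MvPolynomial (Fin n) ℝ)
    (g : Fin m → Fin n → MvPolynomial (Fin n) ℝ) (k : ℕ)
    (hk : accModule f g k = accModule f g (k + 1)) (j : ℕ) :
    accFam f g j ⊆ (accModule f g k : Set (Fin n → MvPolynomial (Fin n) ℝ)) := by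
  intro h hh
  have h1 : h ∈ accFam f g (k + j) := accFam_mono f g (Nat.le_add_left j k) hh
  have h2 : h ∈ accModule f g (k + j) := Submodule.subset_span h1
  rwa [accModule_stab f g k hk j] at h2

lemma pvfEval_mem_accSpan (f : Fin n → MvPolynomial (Fin n) ℝ)
    (g : Fin m → Fin n → MvPolynomial (Fin n) ℝ) (k : ℕ) (a : Fin n → ℝ)
    {h : Fin n → MvPolynomial (Fin n) ℝ} (hh : h ∈ accModule f g k) :
    pvfEval h a ∈ accSpan f g k a := by
  induction hh using Submodule.span_induction with
  | mem y hy => exact Submodule.subset_span ⟨y, hy, rfl⟩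
  | zero => rw [pvfEval_zero]; exact zero_mem _
  | add y z hy hz hy' hz' => rw [pvfEval_add]; exact add_mem hy' hz'
  | smul p y hy hy' => rw [pvfEval_smul]; exact Submodule.smul_mem _ _ hy'

lemma accSpanInf_eq (f : Fin n → MvPolynomial (Fin n) ℝ)
    (g : Fin m → Fin n → MvPolynomial (Fin n) ℝ) (k : ℕ)
    (hk : accModule f g k = accModule f g (k + 1)) (a : Fin n → ℝ) :
    accSpanInf f g a = accSpan f g k a := by
  refine le_antisymm ?_ ?_
  · refine Submodule.span_le.mpr ?_
    rintro _ ⟨h, hh, rfl⟩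
    obtain ⟨_, ⟨j, rfl⟩, hj⟩ := hh
    exact pvfEval_mem_accSpan f g k a (accFam_subset_accModule f g k hk j hj)
  · refine Submodule.span_mono (Set.image_mono ?_)
    exact Set.subset_iUnion (accFam f g) k

/-! ### Minors and linear independence -/

lemma li_iff_exists_rows {l : ℕ} (v : Fin l → (Fin n → ℝ)) :
    LinearIndependent ℝ v ↔
      ∃ rows : Fin l → Fin n, (Matrix.of fun i j => v j (rows i)).det ≠ 0 := by
  constructor
  · intro hv
    set M : Matrix (Fin n) (Fin l) ℝ := Matrix.of fun i j => v j i with hMdef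
    have hrank : M.rank = l := by
      rw [Matrix.rank_eq_finrank_span_cols]
      have hr : Set.range M.col = Set.range v := rfl
      rw [hr, finrank_span_eq_card hv, Fintype.card_fin]
    have hspan : Submodule.span ℝ (Set.range (M : Fin n → Fin l → ℝ)) = ⊤ := by
      apply Submodule.eq_top_of_finrank_eq
      change Module.finrank ℝ (Submodule.span ℝ (Set.range M.row)) = _
      rw [← Matrix.rank_eq_finrank_span_row, hrank, Module.finrank_fintype_fun_eq_card,
        Fintype.card_fin]
    obtain ⟨t, hts, htspan, htli⟩ :=
      exists_linearIndependent ℝ (Set.range (M : Fin n → Fin l → ℝ))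
    haveI : Fintype t := htli.setFinite.fintype
    have hcard : Fintype.card t = l := by
      have h1 := finrank_span_set_eq_card htli
      rw [htspan, hspan] at h1
      rw [← Set.toFinset_card, ← h1, finrank_top, Module.finrank_fintype_fun_eq_card,
        Fintype.card_fin]
    have hle : l ≤ Fintype.card t := hcard.ge
    let e : Fin l → t := (Fintype.equivFin t).symm ∘ Fin.castLE hle
    have he : Function.Injective e :=
      (Fintype.equivFin t).symm.injective.comp (Fin.castLE_injective hle)
    have hw : LinearIndependent ℝ (fun j => (e j : Fin l → ℝ)) := htli.comp e he
    have hmem : ∀ j, (e j : Fin l → ℝ) ∈ Set.range (M : Fin n → Fin l → ℝ) :=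
      fun j => hts (e j).2
    choose rows hrows using fun j => hmem j
    refine ⟨rows, ?_⟩
    have hSrows : (fun i => (Matrix.of fun i j => v j (rows i)) i) =
        fun i => (e i : Fin l → ℝ) := by
      funext i
      rw [← hrows i]
      rfl
    have hli' : LinearIndependent ℝ (fun i => (Matrix.of fun i j => v j (rows i)) i) := by
      rw [hSrows]; exact hw
    have := Matrix.linearIndependent_rows_iff_isUnit.mp hli'
    rw [Matrix.isUnit_iff_isUnit_det, isUnit_iff_ne_zero] at this
    exact this
  · rintro ⟨rows, hdet⟩
    set S : Matrix (Fin l) (Fin l) ℝ := Matrix.of fun i j => v j (rows i) with hSdef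
    have hunit : IsUnit S := (Matrix.isUnit_iff_isUnit_det S).mpr (isUnit_iff_ne_zero.mpr hdet)
    have hcols : LinearIndependent ℝ (fun j => Sᵀ j) :=
      Matrix.linearIndependent_cols_iff_isUnit.mpr hunit
    have hcomp : (fun j => Sᵀ j) = (LinearMap.funLeft ℝ ℝ rows) ∘ v := by
      funext j; rfl
    rw [hcomp] at hcols
    exact LinearIndependent.of_comp _ hcols

lemma le_finrank_span_iff (V : Set (Fin n → ℝ)) (l : ℕ) :
    l ≤ Module.finrank ℝ (Submodule.span ℝ V) ↔
      ∃ v : Fin l → (Fin n → ℝ), (∀ j, v j ∈ V) ∧ LinearIndependent ℝ v := by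
  constructor
  · intro hle
    obtain ⟨t, hts, htspan, htli⟩ := exists_linearIndependent ℝ V
    haveI : Fintype t := htli.setFinite.fintype
    have hcard : l ≤ Fintype.card t := by
      have h1 := finrank_span_set_eq_card htli
      rw [htspan] at h1
      rw [← Set.toFinset_card, ← h1]
      exact hle
    let e : Fin l → t := (Fintype.equivFin t).symm ∘ Fin.castLE hcard
    have he : Function.Injective e :=
      (Fintype.equivFin t).symm.injective.comp (Fin.castLE_injective hcard)
    exact ⟨fun j => (e j : Fin n → ℝ), fun j => hts (e j).2, htli.comp e he⟩
  · rintro ⟨v, hv, hli⟩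
    calc l = Module.finrank ℝ (Submodule.span ℝ (Set.range v)) := by
            rw [finrank_span_eq_card hli, Fintype.card_fin]
      _ ≤ Module.finrank ℝ (Submodule.span ℝ V) :=
            Submodule.finrank_mono (Submodule.span_mono (Set.range_subset_iff.mpr hv))

lemma finrank_span_lt_iff (V : Set (Fin n → ℝ)) (l : ℕ) :
    Module.finrank ℝ (Submodule.span ℝ V) < l ↔
      ∀ (rows : Fin l → Fin n) (v : Fin l → (Fin n → ℝ)), (∀ j, v j ∈ V) →
        (Matrix.of fun i j => v j (rows i)).det = 0 := by
  rw [← not_le, le_finrank_span_iff]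
  constructor
  · intro hne rows v hv
    by_contra hdet
    exact hne ⟨v, hv, (li_iff_exists_rows v).mpr ⟨rows, hdet⟩⟩
  · rintro hall ⟨v, hv, hli⟩
    obtain ⟨rows, hdet⟩ := (li_iff_exists_rows v).mp hli
    exact hdet (hall rows v hv)

lemma mem_zeroSet_span_iff (S : Set (MvPolynomial (Fin n) ℝ)) (a : Fin n → ℝ) :
    a ∈ zeroSet (Ideal.span S) ↔ ∀ p ∈ S, eval a p = 0 := by
  constructor
  · exact fun h p hp => h p (Ideal.subset_span hp)
  · intro h p hp
    have hle : Ideal.span S ≤ RingHom.ker (eval a : MvPolynomial (Fin n) ℝ →+* ℝ) :=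
      Ideal.span_le.mpr fun q hq => h q hq
    exact hle hp

end Aux

/-- For `1 ≤ l ≤ n`, the set `S_∞^{<l}` is algebraic; more precisely,
for any `k` with `C^{#k} = C^{#k+1}`, `S_∞^{<l} = S_k^{<l}` and `S_∞^{<l} = 𝕍(J)` where
`J` is the ideal generated by all `l×l` minors of the matrix with columns in `𝒞^k`. -/
theorem singular_set_lt_is_algebraic {n m : ℕ}
    (f : Fin n → MvPolynomial (Fin n) ℝ) (g : Fin m → Fin n → MvPolynomial (Fin n) ℝ)
    (l : ℕ) (hl : 1 ≤ l) (hln : l ≤ n) :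
    (∃ J : Ideal (MvPolynomial (Fin n) ℝ), singularSetInfLt f g l = zeroSet J) ∧
    ∀ k : ℕ, accModule f g k = accModule f g (k + 1) →
      singularSetInfLt f g l = singularSetLt f g k l ∧
      singularSetInfLt f g l = zeroSet (minorIdeal f g k l) := by
  have main : ∀ k : ℕ, accModule f g k = accModule f g (k + 1) →
      singularSetInfLt f g l = singularSetLt f g k l ∧
      singularSetInfLt f g l = zeroSet (minorIdeal f g k l) := by
    intro k hk
    have h1 : singularSetInfLt f g l = singularSetLt f g k l := by
      ext a
      simp only [singularSetInfLt, singularSetLt, Set.mem_setOf_eq]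
      rw [accSpanInf_eq f g k hk a]
    refine ⟨h1, ?_⟩
    rw [h1]
    ext a
    have hmem : a ∈ zeroSet (minorIdeal f g k l) ↔
        ∀ p ∈ {p | ∃ (rows : Fin l → Fin n)
            (cols : Fin l → (Fin n → MvPolynomial (Fin n) ℝ)),
            (∀ j, cols j ∈ accFam f g k) ∧ p = (Matrix.of fun i j => cols j (rows i)).det},
          eval a p = 0 := mem_zeroSet_span_iff _ a
    rw [hmem]
    show Module.finrank ℝ (accSpan f g k a) < l ↔ _
    rw [show accSpan f g k a =
        Submodule.span ℝ ((fun h => pvfEval h a) '' accFam f g k) from rfl,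
      finrank_span_lt_iff]
    constructor
    · intro hall p hp
      obtain ⟨rows, cols, hcols, rfl⟩ := hp
      have hd := hall rows (fun j => pvfEval (cols j) a)
        (fun j => ⟨cols j, hcols j, rfl⟩)
      calc eval a (Matrix.of fun i j => cols j (rows i)).det
          = ((Matrix.of fun i j => cols j (rows i)).map (eval a)).det :=
            RingHom.map_det _ _
        _ = 0 := hd
    · intro hz rows v hv
      choose cols hcols hveq using hv
      have hgen := hz _ ⟨rows, cols, hcols, rfl⟩
      rw [RingHom.map_det] at hgen
      have hMeq : (eval a : MvPolynomial (Fin n) ℝ →+* ℝ).mapMatrix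
            (Matrix.of fun i j => cols j (rows i)) =
          Matrix.of fun i j => v j (rows i) := by
        ext i j
        simp only [RingHom.mapMatrix_apply, Matrix.map_apply, Matrix.of_apply]
        rw [← hveq j]
        rfl
      rwa [hMeq] at hgen
  refine ⟨?_, main⟩
  obtain ⟨k, hk⟩ := monotone_stabilizes_iff_noetherian.mpr inferInstance
    ⟨accModule f g, accModule_mono f g⟩
  exact ⟨minorIdeal f g k l, (main k (hk (k + 1) (Nat.le_succ k))).2⟩
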